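/- Under the shared-Bernoulli coupling of Greedy and OPT with geometric usage durations, define τ_i(t) = max{ t' < t : A_{t'} = i, or t' = 0 }, the last time before t that Greedy matched resource i. If t ≠ s are two times such that both events {A*_t = i and i ∉ I_t} and {A*_s = i and i ∉ I_s} occur (on the same sample path), then τ_i(t) ≠ τ_i(s). -/

import Mathlib

open Finset

/-- An online policy for the online matching problem with reusable resources,
with `N` resources, `T` requests, and neighborhoods `Nbr`.  Upon arrival of
request `t`, the policy observes the time `t`, the set of currently available
resources, and the history of previously observed availability sets, and
matches the request to at most one available resource adjacent to `t`
(`none` means no match). -/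
structure Policy (N T : ℕ) (Nbr : Fin T → Finset (Fin N)) where
  act : Fin T → Finset (Fin N) → List (Finset (Fin N)) → Option (Fin N)
  feasible : ∀ t I hist i, act t I hist = some i → i ∈ I ∩ Nbr t

/-- Sample space of the shared-Bernoulli coupling for geometric usage
durations: `ω i t` is the return flag `P_{it} ~ Bernoulli (p i)`.  A resource
`i` that is unavailable returns at the start of time `t` iff `ω i t = true`;
this makes the usage duration of every match of `i` distributed as
`Geometric (p i)` on `{1, 2, ...}`. -/
abbrev Flags (N T : ℕ) := Fin N → Fin T → Bool

/-- One step of the dynamics at time `t`.  The state is the pair consisting of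
the set of resources unavailable at the end of the previous step and the
history of observed availability sets. -/
def step {N T : ℕ} {Nbr : Fin T → Finset (Fin N)} (π : Policy N T Nbr)
    (ω : Flags N T) (s : Finset (Fin N) × List (Finset (Fin N))) (t : Fin T) :
    Finset (Fin N) × List (Finset (Fin N)) :=
  let busy := s.1.filter fun i => ω i t = false
  let I : Finset (Fin N) := Finset.univ \ busy
  match π.act t I s.2 with
  | none => (busy, I :: s.2)
  | some i => (insert i busy, I :: s.2)

/-- The state just before step `n` (resources unavailable at the end of step
`n-1`, together with the observed history). -/
def stateUpTo {N T : ℕ} {Nbr : Fin T → Finset (Fin N)} (π : Policy N T Nbr)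
    (ω : Flags N T) (n : ℕ) : Finset (Fin N) × List (Finset (Fin N)) :=
  ((List.finRange T).take n).foldl (step π ω) (∅, [])

/-- `I_t`: the set of resources available at time `t` under policy `π`. -/
def avail {N T : ℕ} {Nbr : Fin T → Finset (Fin N)} (π : Policy N T Nbr)
    (ω : Flags N T) (t : Fin T) : Finset (Fin N) :=
  Finset.univ \ ((stateUpTo π ω t.val).1.filter fun i => ω i t = false)

/-- `A_t`: the resource matched at time `t` under policy `π` (`none` = no match). -/
def act {N T : ℕ} {Nbr : Fin T → Finset (Fin N)} (π : Policy N T Nbr)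
    (ω : Flags N T) (t : Fin T) : Option (Fin N) :=
  π.act t (avail π ω t) (stateUpTo π ω t.val).2

/-- The total reward collected by policy `π` on the sample path `ω`. -/
def reward {N T : ℕ} {Nbr : Fin T → Finset (Fin N)} (r : Fin N → ℝ)
    (π : Policy N T Nbr) (ω : Flags N T) : ℝ :=
  ∑ t : Fin T, (act π ω t).elim 0 r

/-- Probability of the flag configuration `ω` when `P_{it} ~ Bernoulli (p i)`
independently. -/
noncomputable def weight {N T : ℕ} (p : Fin N → ℝ) (ω : Flags N T) : ℝ :=
  ∏ i : Fin N, ∏ t : Fin T, if ω i t then p i else 1 - p i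

/-- Expectation over the i.i.d. Bernoulli return flags. -/
noncomputable def expect {N T : ℕ} (p : Fin N → ℝ) (f : Flags N T → ℝ) : ℝ :=
  ∑ ω : Flags N T, weight p ω * f ω

/-- The greedy policy: match the available neighboring resource of largest
index (equivalently, of highest reward, since rewards are sorted). -/
def greedy (N T : ℕ) (Nbr : Fin T → Finset (Fin N)) : Policy N T Nbr where
  act := fun t I _ => if h : (I ∩ Nbr t).Nonempty then some ((I ∩ Nbr t).max' h) else none
  feasible := by
    intro t I hist i hi
    try simp only at hi
    by_cases h : (I ∩ Nbr t).Nonempty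
    · rw [dif_pos h, Option.some.injEq] at hi
      exact hi ▸ Finset.max'_mem _ h
    · rw [dif_neg h] at hi
      exact absurd hi (by simp)

/-- `Greedy(I)`: the expected total reward of the greedy policy. -/
noncomputable def greedyVal (N T : ℕ) (Nbr : Fin T → Finset (Fin N))
    (r : Fin N → ℝ) (p : Fin N → ℝ) : ℝ :=
  expect p (reward r (greedy N T Nbr))

/-- `OPT(I)`: the optimal expected total reward over all (clairvoyant)
policies; such a policy knows the whole instance, including the request
sequence, but observes returns only as they occur. -/
noncomputable def optVal (N T : ℕ) (Nbr : Fin T → Finset (Fin N))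
    (r : Fin N → ℝ) (p : Fin N → ℝ) : ℝ :=
  ⨆ π : Policy N T Nbr, expect p (reward r π)

/-- `τ_i(t)`: the last time `t' < t` at which Greedy matched resource `i`
(`⊥` plays the role of the convention `t' = 0`, i.e. no such time). -/
def tau {N T : ℕ} (Nbr : Fin T → Finset (Fin N)) (ω : Flags N T)
    (i : Fin N) (t : Fin T) : WithBot (Fin T) :=
  (Finset.univ.filter fun s : Fin T =>
      s < t ∧ act (greedy N T Nbr) ω s = some i).max

lemma stateUpTo_succ {N T : ℕ} {Nbr : Fin T → Finset (Fin N)} (π : Policy N T Nbr)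
    (ω : Flags N T) (u : Fin T) :
    stateUpTo π ω (u.val + 1) = step π ω (stateUpTo π ω u.val) u := by
  unfold stateUpTo
  rw [List.take_succ, List.foldl_append]
  have : (List.finRange T)[u.val]? = some u := by
    rw [List.getElem?_eq_getElem (by simpa using u.isLt)]
    simp
  rw [this]
  rfl

lemma not_mem_avail {N T : ℕ} {Nbr : Fin T → Finset (Fin N)} (π : Policy N T Nbr)
    (ω : Flags N T) (i : Fin N) (u : Fin T) :
    i ∉ avail π ω u ↔ i ∈ (stateUpTo π ω u.val).1 ∧ ω i u = false := by
  simp [avail]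

lemma mem_state_succ {N T : ℕ} {Nbr : Fin T → Finset (Fin N)} (π : Policy N T Nbr)
    (ω : Flags N T) (i : Fin N) (u : Fin T) :
    i ∈ (stateUpTo π ω (u.val + 1)).1 ↔
      (i ∈ (stateUpTo π ω u.val).1 ∧ ω i u = false) ∨ act π ω u = some i := by
  rw [stateUpTo_succ]
  have hact : act π ω u =
      π.act u (Finset.univ \ ((stateUpTo π ω u.val).1.filter fun j => ω j u = false))
        (stateUpTo π ω u.val).2 := rfl
  simp only [step]
  cases h : π.act u (Finset.univ \ ((stateUpTo π ω u.val).1.filter fun j => ω j u = false))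
      (stateUpTo π ω u.val).2 with
  | none =>
      rw [hact, h]
      simp [Finset.mem_filter]
  | some j =>
      rw [hact, h]
      simp only [Finset.mem_insert, Finset.mem_filter, Option.some.injEq]
      constructor
      · rintro (rfl | hm)
        · exact Or.inr rfl
        · exact Or.inl hm
      · rintro (hm | rfl)
        · exact Or.inr hm
        · exact Or.inl rfl

lemma tau_core {N T : ℕ} {Nbr : Fin T → Finset (Fin N)}
    (π : Policy N T Nbr) (ω : Flags N T) (i : Fin N) (t s : Fin T)
    (hlt : t < s)
    (ht : act π ω t = some i ∧ i ∉ avail (greedy N T Nbr) ω t)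
    (hs : act π ω s = some i ∧ i ∉ avail (greedy N T Nbr) ω s)
    (heq : tau Nbr ω i t = tau Nbr ω i s) : False := by
  have hsI := (not_mem_avail _ ω i s).mp hs.2
  -- Greedy matches i at no time in [t, s)
  have hno : ∀ v : Fin T, t ≤ v → v < s → act (greedy N T Nbr) ω v ≠ some i := by
    intro v htv hvs hv
    have h1 : (v : WithBot (Fin T)) ≤ tau Nbr ω i t := by
      rw [heq]
      exact Finset.le_max (by simp [tau, Finset.mem_filter, hvs, hv])
    obtain ⟨b, hb⟩ : ∃ b : Fin T, tau Nbr ω i t = (b : WithBot (Fin T)) := by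
      cases hmax : tau Nbr ω i t with
      | bot => rw [hmax] at h1; exact absurd h1 (by simp)
      | coe b => exact ⟨b, rfl⟩
    have hbmem := Finset.mem_of_max hb
    rw [Finset.mem_filter] at hbmem
    have hbt : b < t := hbmem.2.1
    rw [hb, WithBot.coe_le_coe] at h1
    exact absurd (lt_of_le_of_lt h1 hbt) (not_lt.mpr htv)
  -- backward induction under Greedy: flags are false on [t, s]
  have haux : ∀ n, ∀ v : Fin T, v.val + n = s.val → t ≤ v →
      i ∈ (stateUpTo (greedy N T Nbr) ω v.val).1 ∧ ω i v = false := by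
    intro n
    induction n with
    | zero =>
        intro v hv _
        have : v = s := Fin.ext (by omega)
        subst this; exact hsI
    | succ m ih =>
        intro v hv htv
        have hvT : v.val + 1 < T := by have := s.isLt; omega
        have h1 := ih ⟨v.val + 1, hvT⟩ (by simpa using (by omega : v.val + 1 + m = s.val))
          (le_trans htv (by simp [Fin.le_def]))
        have h2 := (mem_state_succ (greedy N T Nbr) ω i v).mp h1.1
        rcases h2 with h2 | h2
        · exact h2
        · exact absurd h2 (hno v htv (by rw [Fin.lt_def]; omega))
  have hflag : ∀ v : Fin T, t ≤ v → v ≤ s → ω i v = false := by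
    intro v h1 h2
    exact (haux (s.val - v.val) v (by rw [Fin.le_def] at h2; omega) h1).2
  -- forward induction under π: i stays busy from t+1 through s
  have hts' : t.val < s.val := hlt
  have hpi : ∀ n, t.val + 1 + n ≤ s.val → i ∈ (stateUpTo π ω (t.val + 1 + n)).1 := by
    intro n
    induction n with
    | zero =>
        intro _
        exact (mem_state_succ π ω i t).mpr (Or.inr ht.1)
    | succ m ih =>
        intro h
        have hm := ih (by omega)
        have hvT : t.val + 1 + m < T := by have := s.isLt; omega
        have hω : ω i ⟨t.val + 1 + m, hvT⟩ = false := by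
          apply hflag
          · simp only [Fin.le_def, Fin.val_mk]; omega
          · simp only [Fin.le_def, Fin.val_mk]; omega
        exact (mem_state_succ π ω i ⟨t.val + 1 + m, hvT⟩).mpr (Or.inl ⟨hm, hω⟩)
  have hfin : i ∈ (stateUpTo π ω s.val).1 := by
    have := hpi (s.val - t.val - 1) (by omega)
    have hidx : t.val + 1 + (s.val - t.val - 1) = s.val := by omega
    rwa [hidx] at this
  have hnot : i ∉ avail π ω s :=
    (not_mem_avail π ω i s).mpr ⟨hfin, hflag s (le_of_lt hlt) le_rfl⟩
  have hfe := π.feasible s (avail π ω s) (stateUpTo π ω s.val).2 i hs.1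
  exact hnot (Finset.mem_inter.mp hfe).1

/-- **Claim 1 (injectivity of `τ`).**  Under the shared-Bernoulli coupling of
Greedy and any benchmark policy `π` (in particular the optimal clairvoyant
policy `OPT`) with geometric usage durations, if `t ≠ s` are two times such
that, on the same sample path `ω`, both events `{A*_t = i, i ∉ I_t}` and
`{A*_s = i, i ∉ I_s}` occur (`I_t` being Greedy's availability set), then
`τ_i(t) ≠ τ_i(s)`. -/
theorem tau_injective_on_lost_matches
    (N T : ℕ) (r : Fin N → ℝ) (hr0 : ∀ i, 0 ≤ r i) (hrmono : Monotone r)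
    (Nbr : Fin T → Finset (Fin N))
    (pv : Fin N → ℝ) (hpv0 : ∀ i, 0 ≤ pv i) (hpv1 : ∀ i, pv i ≤ 1)
    (π : Policy N T Nbr) (ω : Flags N T) (i : Fin N) (t s : Fin T)
    (hts : t ≠ s)
    (ht : act π ω t = some i ∧ i ∉ avail (greedy N T Nbr) ω t)
    (hs : act π ω s = some i ∧ i ∉ avail (greedy N T Nbr) ω s) :
    tau Nbr ω i t ≠ tau Nbr ω i s := by
  intro heq
  rcases lt_or_gt_of_ne hts with h | h
  · exact tau_core π ω i t s h ht hs heq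
  · exact tau_core π ω i s t h hs ht heq.symm
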